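/- arXiv:2006.07658 — 2 statements merged into one kernel-verified Lean document; each statement's English description precedes it below -/
import Mathlib

section
/- Let X, Y be Hilbert spaces, R ∈ B(X,Y), B ∈ B(Y) with ran B ⊆ ran R and ran B closed of finite codimension in Y. Let P be the orthogonal projection onto (ran B)^⊥. Then ran(PR) is finite-dimensional and there exists a finite-dimensional subspace Z ⊆ X with dim Z = dim ran(PR) and PR|_Z : Z → ran(PR) bijective; moreover P_Z := (PR|_Z)^{-1} PR is a bounded (indeed compact) projection on X with range Z. -/
set_option synthInstance.maxHeartbeats 1000000
set_option maxHeartbeats 2000000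

noncomputable section

/-- The map `y ↦ P y` where `P` is the orthogonal projection of `Y` onto
`(ran B)^⊥`, viewed as an operator `Y → Y`. -/
def projPerpRange {Y : Type*} [NormedAddCommGroup Y] [InnerProductSpace ℂ Y]
    [CompleteSpace Y] (B : Y →L[ℂ] Y)
    [FiniteDimensional ℂ ((LinearMap.range (B : Y →ₗ[ℂ] Y))ᗮ)] : Y →L[ℂ] Y :=
  ((LinearMap.range (B : Y →ₗ[ℂ] Y))ᗮ).subtypeL ∘L Submodule.orthogonalProjectionOnto (LinearMap.range (B : Y →ₗ[ℂ] Y))ᗮ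

/-- Abstraction of the construction of the subspace `Z` and the compact
projection `P_Z` in the generalized Helmholtz decomposition (Theorem 3.5):
if `ran B ⊆ ran R`, `ran B` is closed with finite codimension, and `P` is the
orthogonal projection onto `(ran B)^⊥`, then `ran(PR)` is finite-dimensional,
there is a finite-dimensional `Z ⊆ X` with `dim Z = dim ran(PR)` on which
`PR` restricts bijectively onto `ran(PR)`, and `P_Z := (PR|_Z)⁻¹ PR` is a
compact projection on `X` with range `Z` satisfying `PR ∘ P_Z = PR`. -/
theorem stmt11
    {X Y : Type*} [NormedAddCommGroup X] [InnerProductSpace ℂ X] [CompleteSpace X]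
    [NormedAddCommGroup Y] [InnerProductSpace ℂ Y] [CompleteSpace Y]
    (R : X →L[ℂ] Y) (B : Y →L[ℂ] Y)
    (hsub : LinearMap.range (B : Y →ₗ[ℂ] Y) ≤ LinearMap.range (R : X →ₗ[ℂ] Y))
    (hclosed : IsClosed (LinearMap.range (B : Y →ₗ[ℂ] Y) : Set Y))
    [FiniteDimensional ℂ ((LinearMap.range (B : Y →ₗ[ℂ] Y))ᗮ)] :
    FiniteDimensional ℂ (LinearMap.range ((projPerpRange B ∘L R : X →L[ℂ] Y) : X →ₗ[ℂ] Y)) ∧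
      ∃ Z : Submodule ℂ X, FiniteDimensional ℂ Z ∧
        Module.finrank ℂ Z =
          Module.finrank ℂ (LinearMap.range ((projPerpRange B ∘L R : X →L[ℂ] Y) : X →ₗ[ℂ] Y)) ∧
        (∀ y ∈ LinearMap.range ((projPerpRange B ∘L R : X →L[ℂ] Y) : X →ₗ[ℂ] Y),
          ∃! z : X, z ∈ Z ∧ projPerpRange B (R z) = y) ∧
        ∃ PZ : X →L[ℂ] X, IsCompactOperator PZ ∧ PZ ∘L PZ = PZ ∧
          LinearMap.range (PZ : X →ₗ[ℂ] X) = Z ∧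
          ∀ x : X, projPerpRange B (R (PZ x)) = projPerpRange B (R x) := by
  classical
  set T : X →L[ℂ] Y := projPerpRange B ∘L R with hT
  have hrange : LinearMap.range (T : X →ₗ[ℂ] Y) ≤ (LinearMap.range (B : Y →ₗ[ℂ] Y))ᗮ := by
    rintro y ⟨x, rfl⟩
    exact ((Submodule.orthogonalProjectionOnto (LinearMap.range (B : Y →ₗ[ℂ] Y))ᗮ) (R x)).2
  have hfin : FiniteDimensional ℂ (LinearMap.range (T : X →ₗ[ℂ] Y)) :=
    Submodule.finiteDimensional_of_le hrange
  refine ⟨hfin, ?_⟩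
  have hker_closed : IsClosed ((LinearMap.ker (T : X →ₗ[ℂ] Y) : Submodule ℂ X) : Set X) :=
    ContinuousLinearMap.isClosed_ker T
  haveI : CompleteSpace (LinearMap.ker (T : X →ₗ[ℂ] Y)) := hker_closed.completeSpace_coe
  set Z : Submodule ℂ X := (LinearMap.ker (T : X →ₗ[ℂ] Y))ᗮ with hZ
  have hZperp : Zᗮ = LinearMap.ker (T : X →ₗ[ℂ] Y) := Submodule.orthogonal_orthogonal _
  have hzero : ∀ v : X, v ∈ Z → v ∈ LinearMap.ker (T : X →ₗ[ℂ] Y) → v = 0 := by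
    intro v hvZ hvK
    have h0 := Submodule.inner_right_of_mem_orthogonal (K := LinearMap.ker (T : X →ₗ[ℂ] Y)) hvK hvZ
    simpa [inner_self_eq_zero] using h0
  let e : Z →ₗ[ℂ] LinearMap.range (T : X →ₗ[ℂ] Y) :=
    LinearMap.codRestrict (LinearMap.range (T : X →ₗ[ℂ] Y))
      ((T : X →ₗ[ℂ] Y).comp Z.subtype) (fun z => LinearMap.mem_range_self _ _)
  have he_inj : Function.Injective e := by
    intro z w hzw
    have h := congrArg Subtype.val hzw
    have hmem : (z : X) - (w : X) ∈ LinearMap.ker (T : X →ₗ[ℂ] Y) := by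
      simpa [e, LinearMap.mem_ker, map_sub, sub_eq_zero] using h
    exact Subtype.ext (sub_eq_zero.mp (hzero _ (Z.sub_mem z.2 w.2) hmem))
  haveI hfinZ : FiniteDimensional ℂ Z := FiniteDimensional.of_injective e he_inj
  haveI : CompleteSpace Z := FiniteDimensional.complete ℂ Z
  let PZ : X →L[ℂ] X := Z.subtypeL ∘L Z.orthogonalProjectionOnto
  have hPZmem : ∀ x, PZ x ∈ Z := fun x => (Z.orthogonalProjectionOnto x).2
  have hTPZ : ∀ x : X, T (PZ x) = T x := by
    intro x
    have hmem : x - PZ x ∈ Zᗮ := Submodule.sub_starProjection_mem_orthogonal (K := Z) x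
    rw [hZperp] at hmem
    have h2 : T x - T (PZ x) = 0 := by rw [← map_sub]; exact hmem
    exact (sub_eq_zero.mp h2).symm
  have hPZ_self : ∀ z ∈ Z, PZ z = z := by
    intro z hz
    exact (Submodule.starProjection_eq_self_iff (K := Z)).mpr hz
  -- surjectivity of e
  have he_surj : Function.Surjective e := by
    rintro ⟨y, x, rfl⟩
    exact ⟨⟨PZ x, hPZmem x⟩, Subtype.ext (hTPZ x)⟩
  have hrank : Module.finrank ℂ Z = Module.finrank ℂ (LinearMap.range (T : X →ₗ[ℂ] Y)) :=
    (LinearEquiv.ofBijective e ⟨he_inj, he_surj⟩).finrank_eq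
  refine ⟨Z, hfinZ, hrank, ?_, ?_⟩
  · rintro y ⟨x, rfl⟩
    refine ⟨PZ x, ⟨hPZmem x, hTPZ x⟩, ?_⟩
    rintro z ⟨hzZ, hzT⟩
    have hmem : z - PZ x ∈ LinearMap.ker (T : X →ₗ[ℂ] Y) := by
      have : T z = T (PZ x) := by
        have := hTPZ x
        simp only [hT, ContinuousLinearMap.coe_coe, ContinuousLinearMap.comp_apply] at this hzT ⊢
        rw [hzT, this]
      simp [LinearMap.mem_ker, map_sub, this]
    exact sub_eq_zero.mp (hzero _ (Z.sub_mem hzZ (hPZmem x)) hmem)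
  · refine ⟨PZ, ?_, ?_, ?_, ?_⟩
    · -- compactness
      haveI : ProperSpace Z := FiniteDimensional.proper ℂ Z
      refine ⟨(↑) '' Metric.closedBall (0 : Z) 1,
        ((isCompact_closedBall _ _).image continuous_subtype_val), ?_⟩
      have hsubset : (Z.orthogonalProjectionOnto) ⁻¹' Metric.closedBall (0 : Z) 1 ⊆
          PZ ⁻¹' ((↑) '' Metric.closedBall (0 : Z) 1) := by
        intro x hx
        exact ⟨Z.orthogonalProjectionOnto x, hx, rfl⟩
      refine Filter.mem_of_superset ?_ hsubset
      have h0 : (Z.orthogonalProjectionOnto) 0 = 0 := map_zero _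
      have := (Z.orthogonalProjectionOnto).continuous.continuousAt (x := (0 : X))
      exact this.preimage_mem_nhds (by rw [h0]; exact Metric.closedBall_mem_nhds _ one_pos)
    · ext x
      exact hPZ_self _ (hPZmem x)
    · apply le_antisymm
      · rintro _ ⟨x, rfl⟩; exact hPZmem x
      · intro z hz; exact ⟨z, hPZ_self z hz⟩
    · exact hTPZ
end
end

section
/- Let θ(ω) := max{0, sup_{x∈D} |arg W(M_ω(x))| − π/2}, where M_ω = iωγρ I − Hess(p) + ρ Hess(φ) + c^{-2}ρ^{-1} ∇p ∇p^⊤ with γ, ρ bounded below by positive constants and p, φ ∈ W^{2,∞}. Then lim_{|ω|→∞} θ(ω) = 0. -/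
open Matrix Real

noncomputable section

/-- The matrix `M_ω(x) = iωγρ I − Hess p + ρ Hess φ + c⁻²ρ⁻¹ ∇p ∇pᵀ`
(with `Hp = Hess p`, `Hφ = Hess φ`, `gp = ∇p`). -/
def Mfreq (γ ρ c : EuclideanSpace ℝ (Fin 3) → ℝ)
    (gp : EuclideanSpace ℝ (Fin 3) → Fin 3 → ℝ)
    (Hp Hφ : EuclideanSpace ℝ (Fin 3) → Matrix (Fin 3) (Fin 3) ℝ)
    (ω : ℝ) (x : EuclideanSpace ℝ (Fin 3)) : Matrix (Fin 3) (Fin 3) ℂ :=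
  (Complex.I * ω * γ x * ρ x) • (1 : Matrix (Fin 3) (Fin 3) ℂ)
    + (-(Hp x) + ρ x • Hφ x
        + ((c x) ^ 2 * ρ x)⁻¹ • vecMulVec (gp x) (gp x)).map (fun s => (s : ℂ))

/-- If `cos ε * |z| ≤ |Im z|` for `ε ∈ (0, π/2)`, then `|arg z| ≤ π/2 + ε`. -/
lemma arg_aux {ε : ℝ} (hε : 0 < ε) (hε2 : ε < π / 2) {z : ℂ}
    (h : Real.cos ε * ‖z‖ ≤ |z.im|) : |Complex.arg z| ≤ π / 2 + ε := by
  rcases le_or_gt 0 z.re with hre | hre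
  · have := Complex.abs_arg_le_pi_div_two_iff.mpr hre
    linarith
  · have hz : z ≠ 0 := by
      intro hz0; rw [hz0] at hre; simp at hre
    have habs : 0 < ‖z‖ := norm_pos_iff.mpr hz
    have hcos : 0 < Real.cos ε :=
      Real.cos_pos_of_mem_Ioo ⟨by linarith [Real.pi_pos], hε2⟩
    have him : 0 < |z.im| := lt_of_lt_of_le (mul_pos hcos habs) h
    have hkey : π / 2 - ε ≤ Real.arcsin (|z.im| / ‖z‖) := by
      have h1 : Real.sin (π / 2 - ε) ≤ |z.im| / ‖z‖ := by
        rw [Real.sin_pi_div_two_sub]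
        exact (le_div_iff₀ habs).mpr h
      calc π / 2 - ε = Real.arcsin (Real.sin (π / 2 - ε)) := by
            rw [Real.arcsin_sin (by linarith) (by linarith)]
        _ ≤ Real.arcsin (|z.im| / ‖z‖) := Real.monotone_arcsin h1
    have harc2 : Real.arcsin (|z.im| / ‖z‖) ≤ π / 2 :=
      Real.arcsin_le_pi_div_two _
    have hπ : 0 < π := Real.pi_pos
    rcases le_or_gt 0 z.im with him0 | him0
    · rw [Complex.arg_of_re_neg_of_im_nonneg hre him0]
      have heq : Real.arcsin ((-z).im / ‖z‖) =
          -Real.arcsin (|z.im| / ‖z‖) := by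
        rw [abs_of_nonneg him0, Complex.neg_im, neg_div, Real.arcsin_neg]
      rw [heq, abs_of_nonneg (by linarith)]
      linarith
    · rw [Complex.arg_of_re_neg_of_im_neg hre him0]
      have heq : Real.arcsin ((-z).im / ‖z‖) =
          Real.arcsin (|z.im| / ‖z‖) := by
        rw [abs_of_neg him0, Complex.neg_im]
      rw [heq, abs_of_nonpos (by linarith)]
      linarith

set_option maxHeartbeats 1600000 in
/-- `θ(ω) := max{0, sup_{x∈D} |arg W(M_ω(x))| − π/2} → 0` as `|ω| → ∞`,
i.e. for every `ε > 0` there is `ω₀` such that for `|ω| ≥ ω₀` every value of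
the numerical range of `M_ω(x)`, `x ∈ D`, has argument of modulus at most
`π/2 + ε`. Here the symmetric part is uniformly bounded (`p, φ ∈ W^{2,∞}`)
and `γρ` is uniformly bounded below. -/
theorem stmt15 (D : Set (EuclideanSpace ℝ (Fin 3)))
    (γ ρ c : EuclideanSpace ℝ (Fin 3) → ℝ)
    (gp : EuclideanSpace ℝ (Fin 3) → Fin 3 → ℝ)
    (Hp Hφ : EuclideanSpace ℝ (Fin 3) → Matrix (Fin 3) (Fin 3) ℝ)
    (γl ρl ρu cl Cb : ℝ) (hγl : 0 < γl) (hρl : 0 < ρl) (hcl : 0 < cl)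
    (hγ : ∀ x ∈ D, γl ≤ γ x) (hρ : ∀ x ∈ D, ρl ≤ ρ x ∧ ρ x ≤ ρu)
    (hc : ∀ x ∈ D, cl ≤ c x)
    (hHp : ∀ x ∈ D, (Hp x).IsSymm ∧ ∀ i j, |Hp x i j| ≤ Cb)
    (hHφ : ∀ x ∈ D, (Hφ x).IsSymm ∧ ∀ i j, |Hφ x i j| ≤ Cb)
    (hgp : ∀ x ∈ D, ∀ i, |gp x i| ≤ Cb) :
    ∀ ε > (0 : ℝ), ∃ ω₀ : ℝ, ∀ ω : ℝ, ω₀ ≤ |ω| →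
      ∀ x ∈ D, ∀ ξ : Fin 3 → ℂ, (∑ i, Complex.normSq (ξ i)) = 1 →
        |Complex.arg (star ξ ⬝ᵥ (Mfreq γ ρ c gp Hp Hφ ω x).mulVec ξ)|
          ≤ π / 2 + ε := by
  intro ε hε
  rcases le_or_gt (π / 2) ε with hbig | hsmall
  · exact ⟨0, fun ω _ x _ ξ _ =>
      le_trans (Complex.abs_arg_le_pi _) (by linarith [Real.pi_pos])⟩
  set κ := Real.cos ε with hκdef
  have hκ0 : 0 < κ := Real.cos_pos_of_mem_Ioo ⟨by linarith [Real.pi_pos], hsmall⟩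
  have hκ1 : κ < 1 := by
    have := Real.cos_lt_cos_of_nonneg_of_le_pi (le_refl 0)
      (by linarith [Real.pi_pos]) hε
    simpa [Real.cos_zero] using this
  set C : ℝ := Cb + ρu * Cb + (cl ^ 2 * ρl)⁻¹ * Cb ^ 2 with hCdef
  refine ⟨(3 * C * κ / (1 - κ) + 3 * C + 1) / (γl * ρl), fun ω hω x hx ξ hξ => ?_⟩
  have hCb : 0 ≤ Cb := le_trans (abs_nonneg _) ((hHp x hx).2 0 0)
  have hρx := hρ x hx
  have hγx := hγ x hx
  have hcx := hc x hx
  have hρu : ρl ≤ ρu := le_trans hρx.1 hρx.2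
  have hρu0 : 0 ≤ ρu := le_trans hρl.le hρu
  have hC0 : 0 ≤ C := by
    have h1 : (0:ℝ) ≤ (cl ^ 2 * ρl)⁻¹ := by positivity
    have h2 : (0:ℝ) ≤ ρu * Cb := mul_nonneg hρu0 hCb
    have h3 : (0:ℝ) ≤ (cl ^ 2 * ρl)⁻¹ * Cb ^ 2 := mul_nonneg h1 (sq_nonneg _)
    rw [hCdef]; linarith
  -- the real symmetric part
  set A : Matrix (Fin 3) (Fin 3) ℝ :=
    -(Hp x) + ρ x • Hφ x + ((c x) ^ 2 * ρ x)⁻¹ • vecMulVec (gp x) (gp x) with hAdef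
  have hA : ∀ i j, |A i j| ≤ C := by
    intro i j
    have h1 := (hHp x hx).2 i j
    have h2 := (hHφ x hx).2 i j
    have h3 := hgp x hx i
    have h4 := hgp x hx j
    have hcx0 : (0:ℝ) < c x := lt_of_lt_of_le hcl hcx
    have hρx0 : (0:ℝ) < ρ x := lt_of_lt_of_le hρl hρx.1
    have hinv : ((c x) ^ 2 * ρ x)⁻¹ ≤ (cl ^ 2 * ρl)⁻¹ := by
      apply inv_anti₀ (mul_pos (pow_pos hcl 2) hρl)
      have : cl ^ 2 ≤ (c x) ^ 2 := by nlinarith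
      nlinarith
    have hinv0 : (0:ℝ) ≤ ((c x) ^ 2 * ρ x)⁻¹ :=
      le_of_lt (inv_pos.mpr (mul_pos (pow_pos hcx0 2) hρx0))
    have hAij : A i j = -(Hp x i j) + ρ x * Hφ x i j
        + ((c x) ^ 2 * ρ x)⁻¹ * (gp x i * gp x j) := by
      simp [hAdef, Matrix.add_apply, Matrix.neg_apply, Matrix.smul_apply,
        Matrix.vecMulVec_apply, smul_eq_mul]
    rw [hAij, hCdef]
    have e1 : |(-(Hp x i j))| ≤ Cb := by rwa [abs_neg]
    have e2 : |ρ x * Hφ x i j| ≤ ρu * Cb := by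
      rw [abs_mul, abs_of_pos (lt_of_lt_of_le hρl hρx.1)]
      exact mul_le_mul hρx.2 h2 (abs_nonneg _) (by linarith)
    have e3 : |((c x) ^ 2 * ρ x)⁻¹ * (gp x i * gp x j)| ≤ (cl ^ 2 * ρl)⁻¹ * Cb ^ 2 := by
      rw [abs_mul, abs_of_nonneg hinv0, abs_mul]
      have : |gp x i| * |gp x j| ≤ Cb ^ 2 := by nlinarith [abs_nonneg (gp x i)]
      exact mul_le_mul hinv this (by positivity) (by positivity)
    calc |(-(Hp x i j)) + ρ x * Hφ x i j + ((c x) ^ 2 * ρ x)⁻¹ * (gp x i * gp x j)|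
        ≤ |(-(Hp x i j)) + ρ x * Hφ x i j| + |((c x) ^ 2 * ρ x)⁻¹ * (gp x i * gp x j)| :=
          abs_add_le _ _
      _ ≤ |(-(Hp x i j))| + |ρ x * Hφ x i j| + |((c x) ^ 2 * ρ x)⁻¹ * (gp x i * gp x j)| :=
          by linarith [abs_add_le (-(Hp x i j)) (ρ x * Hφ x i j)]
      _ ≤ Cb + ρu * Cb + (cl ^ 2 * ρl)⁻¹ * Cb ^ 2 := by linarith
  -- decompose the quadratic form
  set a : ℂ := Complex.I * ω * γ x * ρ x with hadef
  set q : ℂ := ∑ i, ∑ j, (starRingEnd ℂ) (ξ i) * (A i j : ℂ) * ξ j with hqdef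
  have h1 : ∑ i, (starRingEnd ℂ) (ξ i) * ξ i = 1 := by
    have hc1 := congrArg (fun r : ℝ => (r : ℂ)) hξ
    push_cast at hc1
    simp only [Complex.normSq_eq_conj_mul_self] at hc1
    exact hc1
  have hz : star ξ ⬝ᵥ (Mfreq γ ρ c gp Hp Hφ ω x).mulVec ξ = a + q := by
    simp only [Mfreq, ← hAdef, dotProduct, Matrix.mulVec, Matrix.add_apply,
      Matrix.smul_apply, Matrix.one_apply, Matrix.map_apply, Pi.star_apply,
      RCLike.star_def, smul_eq_mul, mul_ite, mul_one, mul_zero]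
    have step : ∀ i : Fin 3,
        (starRingEnd ℂ) (ξ i) *
          (∑ j, ((if i = j then a else 0) + (A i j : ℂ)) * ξ j)
        = a * ((starRingEnd ℂ) (ξ i) * ξ i)
          + ∑ j, (starRingEnd ℂ) (ξ i) * (A i j : ℂ) * ξ j := by
      intro i
      rw [Finset.mul_sum]
      have : ∀ j : Fin 3, (starRingEnd ℂ) (ξ i) *
          (((if i = j then a else 0) + (A i j : ℂ)) * ξ j)
          = (if i = j then a * ((starRingEnd ℂ) (ξ i) * ξ j) else 0)
            + (starRingEnd ℂ) (ξ i) * (A i j : ℂ) * ξ j := by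
        intro j; split <;> ring
      rw [Finset.sum_congr rfl (fun j _ => this j), Finset.sum_add_distrib,
        Finset.sum_ite_eq (Finset.univ : Finset (Fin 3)) i
          (fun j => a * ((starRingEnd ℂ) (ξ i) * ξ j))]
      simp
    rw [Finset.sum_congr rfl (fun i _ => step i), Finset.sum_add_distrib,
      ← Finset.mul_sum, h1, mul_one, hqdef]
  -- bound |q|
  have hqabs : ‖q‖ ≤ 3 * C := by
    have hb1 : ‖q‖ ≤ ∑ i, ∑ j, ‖ξ i‖ * C * ‖ξ j‖ := by
      calc ‖q‖ ≤ ∑ i, ‖∑ j, (starRingEnd ℂ) (ξ i) * (A i j : ℂ) * ξ j‖ :=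
            norm_sum_le _ _
        _ ≤ ∑ i, ∑ j, ‖(starRingEnd ℂ) (ξ i) * (A i j : ℂ) * ξ j‖ :=
            Finset.sum_le_sum (fun i _ => norm_sum_le _ _)
        _ ≤ ∑ i, ∑ j, ‖ξ i‖ * C * ‖ξ j‖ := by
            apply Finset.sum_le_sum; intro i _
            apply Finset.sum_le_sum; intro j _
            rw [norm_mul, norm_mul, Complex.norm_conj, Complex.norm_real, Real.norm_eq_abs]
            have : |A i j| ≤ C := hA i j
            exact mul_le_mul_of_nonneg_right
              (mul_le_mul_of_nonneg_left (hA i j) (norm_nonneg _))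
              (norm_nonneg _)
    have hb2 : ∑ i, ∑ j, ‖ξ i‖ * C * ‖ξ j‖
        = C * (∑ i, ‖ξ i‖) ^ 2 := by
      rw [sq, Finset.sum_mul_sum, Finset.mul_sum]
      apply Finset.sum_congr rfl; intro i _
      rw [Finset.mul_sum]
      apply Finset.sum_congr rfl; intro j _; ring
    have hb3 : (∑ i, ‖ξ i‖) ^ 2 ≤ 3 := by
      have := sq_sum_le_card_mul_sum_sq
        (s := (Finset.univ : Finset (Fin 3))) (f := fun i => ‖ξ i‖)
      simp only [Finset.card_univ, Fintype.card_fin] at this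
      have hs : ∑ i, ‖ξ i‖ ^ 2 = 1 := by
        rw [← hξ]; apply Finset.sum_congr rfl; intro i _; exact Complex.sq_norm _
      calc (∑ i, ‖ξ i‖) ^ 2 ≤ 3 * ∑ i, ‖ξ i‖ ^ 2 := by
            exact_mod_cast this
        _ = 3 := by rw [hs]; ring
    calc ‖q‖ ≤ C * (∑ i, ‖ξ i‖) ^ 2 := by rw [← hb2]; exact hb1
      _ ≤ C * 3 := by nlinarith
      _ = 3 * C := by ring
  -- real and imaginary parts
  have ha' : a = Complex.I * ((ω * γ x * ρ x : ℝ) : ℂ) := by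
    rw [hadef]; push_cast; ring
  have hare : a.re = 0 ∧ a.im = ω * γ x * ρ x := by
    rw [ha']
    constructor
    · simp [Complex.mul_re]
    · simp [Complex.mul_im]
  set z : ℂ := star ξ ⬝ᵥ (Mfreq γ ρ c gp Hp Hφ ω x).mulVec ξ with hzdef
  clear_value z a q A C κ
  have hzre : |z.re| ≤ 3 * C := by
    rw [hz, Complex.add_re, hare.1, zero_add]
    exact le_trans (Complex.abs_re_le_norm q) hqabs
  have hωγρ : 3 * C * κ / (1 - κ) + 3 * C + 1 ≤ |ω| * (γ x * ρ x) := by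
    have e1 : (3 * C * κ / (1 - κ) + 3 * C + 1) / (γl * ρl) * (γl * ρl)
        = 3 * C * κ / (1 - κ) + 3 * C + 1 := by
      field_simp
    have e2 : |ω| * (γl * ρl) ≤ |ω| * (γ x * ρ x) := by
      apply mul_le_mul_of_nonneg_left _ (abs_nonneg ω)
      nlinarith
    nlinarith [mul_le_mul_of_nonneg_right hω (le_of_lt (mul_pos hγl hρl)),
      abs_nonneg ω]
  have hzim : 3 * C * κ / (1 - κ) + 1 ≤ |z.im| := by
    have h1 : z.im = ω * γ x * ρ x + q.im := by
      rw [hz, Complex.add_im, hare.2]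
    have h2 : |ω * γ x * ρ x| = |ω| * (γ x * ρ x) := by
      rw [abs_mul, abs_mul, abs_of_pos (lt_of_lt_of_le hγl hγx),
        abs_of_pos (lt_of_lt_of_le hρl hρx.1), mul_assoc]
    have h3 : |q.im| ≤ 3 * C := le_trans (Complex.abs_im_le_norm q) hqabs
    have := abs_sub_abs_le_abs_sub (ω * γ x * ρ x) (-q.im)
    rw [h1]
    have h4 : |ω * γ x * ρ x| - |q.im| ≤ |ω * γ x * ρ x + q.im| := by
      have := abs_add_le (ω * γ x * ρ x + q.im) (-q.im)
      simp only [add_neg_cancel_right, abs_neg] at this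
      linarith
    rw [h2] at h4
    linarith
  -- conclude via arg_aux
  apply arg_aux hε hsmall
  rw [← hκdef]
  have habsz : ‖z‖ ≤ 3 * C + |z.im| :=
    le_trans (Complex.norm_le_abs_re_add_abs_im z) (by linarith)
  have hκne : (1:ℝ) - κ ≠ 0 := by linarith
  have hfrac : (1 - κ) * (3 * C * κ / (1 - κ)) = 3 * C * κ := by
    field_simp
  have him1 : 3 * C * κ ≤ (1 - κ) * |z.im| := by
    have h5 : (1 - κ) * (3 * C * κ / (1 - κ) + 1) ≤ (1 - κ) * |z.im| :=
      mul_le_mul_of_nonneg_left hzim (by linarith)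
    nlinarith
  calc κ * ‖z‖ ≤ κ * (3 * C + |z.im|) :=
        mul_le_mul_of_nonneg_left habsz (le_of_lt hκ0)
    _ ≤ |z.im| := by nlinarith
end
end
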